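/- Let I be a closed unbounded set of ordinals with increasing enumeration ν ↦ κ_ν, let B ⊆ I be limit suitable, and let G = I ∩ [λ, δ) be a gap of B with λ ≠ 0. Let σ' be the supremum of the set of members of B below δ that are limit points of I (σ' = 0 if this set is empty). Then σ' < λ, the set I ∩ (σ', λ) is a nonempty subset of B, none of its members is a limit point of I, its order type is exactly ω, and its supremum is λ. (Thus the tail of every gap of B is an ω-sequence of consecutive successor members of I with supremum the foot λ of the gap.) -/

import Mathlib

open Set

noncomputable section

/-- `l` is a limit point of the set `S` of ordinals: `l > 0` and `sup (S ∩ l) = l`. -/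
def IsLimitPoint (S : Set Ordinal) (l : Ordinal) : Prop :=
  0 < l ∧ sSup (S ∩ Iio l) = l

/-- A set of ordinals is closed if it contains all of its limit points. -/
def IsClosedSet (S : Set Ordinal) : Prop :=
  ∀ l, IsLimitPoint S l → l ∈ S

/-- A set of ordinals is unbounded (in the class of all ordinals). -/
def IsUnboundedSet (S : Set Ordinal) : Prop :=
  ∀ a, ∃ b ∈ S, a < b

/-- `B` is a suitable subset of `I`: it is a countable closed subset of `I`, every member of `B`
which is a limit point of `I` of countable cofinality is a limit point of `B`, and `B` is closed
under immediate predecessors in `I`. -/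
def Suitable (I B : Set Ordinal) : Prop :=
  B ⊆ I ∧ B.Countable ∧ IsClosedSet B ∧
  (∀ β ∈ B, IsLimitPoint I β → β.cof ≤ Cardinal.aleph0 → IsLimitPoint B β) ∧
  (∀ β ∈ B, ∀ m, IsGreatest (I ∩ Iio β) m → m ∈ B)

/-- `G` is a gap of `B` (relative to `I`): a maximal nonempty convex subset of `I \ B`. -/
def IsGap (I B G : Set Ordinal) : Prop :=
  G.Nonempty ∧ G ⊆ I \ B ∧
  (∀ x ∈ G, ∀ y ∈ G, ∀ z ∈ I \ B, x ≤ z → z ≤ y → z ∈ G) ∧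
  ∀ G', G ⊆ G' → G' ⊆ I \ B →
    (∀ x ∈ G', ∀ y ∈ G', ∀ z ∈ I \ B, x ≤ z → z ≤ y → z ∈ G') → G' = G

/-- The foot `λ` of a gap `G` of `B`: `sup({0} ∪ {β ∈ B : β < inf G})`. -/
def GapFoot (B G : Set Ordinal) : Ordinal :=
  sSup (insert 0 {β ∈ B | β < sInf G})

/-- `B` is a limit suitable subset of `I`. -/
def LimitSuitable (I B : Set Ordinal) : Prop :=
  Suitable I (B ∪ {l | IsLimitPoint B l}) ∧
  ∀ G, IsGap I B G →
    ((IsUnboundedSet G ∧ G = I ∩ Ici (GapFoot B G)) ∨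
     (∃ δ, IsLeast {β ∈ B | ∀ g ∈ G, g < β} δ ∧
        IsLimitPoint I δ ∧ Cardinal.aleph0 < δ.cof ∧
        G = I ∩ Ico (GapFoot B G) δ)) ∧
    (GapFoot B G ≠ 0 →
      ∃ ν : Ordinal, GapFoot B G = Ordinal.enumOrd I (ν + Ordinal.omega0))

section Aux

variable {I B : Set Ordinal}

theorem aux_not_bddAbove (h : IsUnboundedSet I) : ¬ BddAbove I := by
  rintro ⟨a, ha⟩
  obtain ⟨b, hb, hab⟩ := h a
  exact absurd (ha hb) (not_le.2 hab)

theorem aux_lt_add_one (c : Ordinal) : c < c + 1 := by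
  rw [Ordinal.add_one_eq_succ]; exact Order.lt_succ c

theorem aux_isGreatest_pred (h : ¬ BddAbove I) (c : Ordinal) :
    IsGreatest (I ∩ Iio (Ordinal.enumOrd I (c + 1))) (Ordinal.enumOrd I c) := by
  have hm := Ordinal.enumOrd_strictMono h
  constructor
  · exact ⟨Ordinal.enumOrd_mem h c, hm (aux_lt_add_one c)⟩
  · rintro y ⟨hyI, hy⟩
    obtain ⟨d, rfl⟩ := Ordinal.enumOrd_surjective h hyI
    have hd : d < c + 1 := hm.lt_iff_lt.1 hy
    rw [Ordinal.add_one_eq_succ, Order.lt_succ_iff] at hd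
    exact hm.monotone hd

theorem aux_not_limitPoint_succ (h : ¬ BddAbove I) (c : Ordinal) :
    ¬ IsLimitPoint I (Ordinal.enumOrd I (c + 1)) := by
  rintro ⟨-, hsup⟩
  rw [(aux_isGreatest_pred h c).csSup_eq] at hsup
  exact absurd hsup (ne_of_lt ((Ordinal.enumOrd_strictMono h) (aux_lt_add_one c)))

theorem aux_not_limitPoint_zero (h : ¬ BddAbove I) :
    ¬ IsLimitPoint I (Ordinal.enumOrd I 0) := by
  rintro ⟨hpos, hsup⟩
  have hemp : I ∩ Iio (Ordinal.enumOrd I 0) = ∅ := by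
    ext x
    simp only [mem_inter_iff, mem_Iio, mem_empty_iff_false, iff_false, not_and]
    intro hxI hx
    obtain ⟨d, rfl⟩ := Ordinal.enumOrd_surjective h hxI
    exact absurd ((Ordinal.enumOrd_strictMono h).lt_iff_lt.1 hx) (not_lt_of_ge (zero_le))
  rw [hemp, csSup_empty] at hsup
  exact hpos.ne (by rw [← hsup]; exact Ordinal.bot_eq_zero.symm)

theorem aux_limit_enumOrd (hcl : IsClosedSet I) (h : ¬ BddAbove I) {o : Ordinal}
    (ho : Order.IsSuccLimit o) :
    IsLimitPoint I (Ordinal.enumOrd I o) ∧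
      Ordinal.enumOrd I o = sSup (Ordinal.enumOrd I '' Iio o) := by
  have hm := Ordinal.enumOrd_strictMono h
  set e := Ordinal.enumOrd I with he
  set s := sSup (e '' Iio o) with hs
  have hbdd : BddAbove (e '' Iio o) := Ordinal.bddAbove_of_small
  have hub : ∀ c < o, e c < s := by
    intro c hc
    have hc1 : c + 1 < o := by rw [Ordinal.add_one_eq_succ]; exact ho.succ_lt hc
    exact lt_of_lt_of_le (hm (aux_lt_add_one c)) (le_csSup hbdd ⟨c + 1, hc1, rfl⟩)
  have hlp : IsLimitPoint I s := by
    constructor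
    · exact lt_of_le_of_lt (zero_le) (hub 0 ho.pos)
    · refine le_antisymm (csSup_le' fun x hx => hx.2.le) ?_
      rw [hs]
      apply csSup_le'
      rintro x ⟨c, hc, rfl⟩
      exact le_csSup ⟨s, fun y hy => hy.2.le⟩ ⟨Ordinal.enumOrd_mem h c, hub c hc⟩
  have h1 : e o ≤ s := Ordinal.enumOrd_le_of_forall_lt (hcl s hlp) hub
  have h2 : s ≤ e o := by
    apply csSup_le'
    rintro x ⟨c, hc, rfl⟩
    exact (hm hc).le
  have heq : e o = s := h1.antisymm h2
  exact ⟨heq ▸ hlp, heq⟩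

theorem aux_limitPoint_mono (hBI : B ⊆ I) {x : Ordinal} (hx : IsLimitPoint B x) :
    IsLimitPoint I x := by
  obtain ⟨hpos, hsup⟩ := hx
  refine ⟨hpos, le_antisymm (csSup_le' fun y hy => hy.2.le) ?_⟩
  have hne : (B ∩ Iio x).Nonempty := by
    by_contra hne
    rw [not_nonempty_iff_eq_empty.1 hne, csSup_empty] at hsup
    exact hpos.ne (by rw [← hsup]; exact Ordinal.bot_eq_zero.symm)
  calc x = sSup (B ∩ Iio x) := hsup.symm
    _ ≤ sSup (I ∩ Iio x) :=
      csSup_le_csSup ⟨x, fun y hy => hy.2.le⟩ hne (inter_subset_inter_left _ hBI)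

theorem aux_exists_gap {x : Ordinal} (hx : x ∈ I \ B) :
    ∃ G', IsGap I B G' ∧ x ∈ G' := by
  set F : Set (Set Ordinal) :=
    {C | x ∈ C ∧ C ⊆ I \ B ∧ ∀ a ∈ C, ∀ b ∈ C, ∀ z ∈ I \ B, a ≤ z → z ≤ b → z ∈ C} with hF
  have hsingle : {x} ∈ F := by
    refine ⟨rfl, singleton_subset_iff.2 hx, ?_⟩
    rintro a rfl b rfl z _ h1 h2
    exact le_antisymm h2 h1
  have hxU : x ∈ ⋃₀ F := ⟨{x}, hsingle, rfl⟩
  have hUsub : ⋃₀ F ⊆ I \ B := by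
    rintro y ⟨C, hC, hy⟩
    exact hC.2.1 hy
  have hUconv : ∀ a ∈ ⋃₀ F, ∀ b ∈ ⋃₀ F, ∀ z ∈ I \ B, a ≤ z → z ≤ b → z ∈ ⋃₀ F := by
    rintro a ⟨C1, hC1, ha⟩ b ⟨C2, hC2, hb⟩ z hz h1 h2
    rcases le_total z x with hzx | hxz
    · exact ⟨C1, hC1, hC1.2.2 a ha x hC1.1 z hz h1 hzx⟩
    · exact ⟨C2, hC2, hC2.2.2 x hC2.1 b hb z hz hxz h2⟩
  refine ⟨⋃₀ F, ⟨⟨x, hxU⟩, hUsub, hUconv, ?_⟩, hxU⟩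
  intro G' hsub hsub' hconv
  have : G' ∈ F := ⟨hsub hxU, hsub', hconv⟩
  exact le_antisymm (subset_sUnion_of_mem this) hsub |>.symm ▸ rfl

theorem aux_gap_unique {G1 G2 : Set Ordinal} (h1 : IsGap I B G1) (h2 : IsGap I B G2)
    {x : Ordinal} (hx1 : x ∈ G1) (hx2 : x ∈ G2) : G1 = G2 := by
  have hconv : ∀ a ∈ G1 ∪ G2, ∀ b ∈ G1 ∪ G2, ∀ z ∈ I \ B, a ≤ z → z ≤ b → z ∈ G1 ∪ G2 := by
    rintro a ha b hb z hz hza hzb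
    rcases le_total z x with hzx | hxz
    · rcases ha with ha | ha
      · exact Or.inl (h1.2.2.1 a ha x hx1 z hz hza hzx)
      · exact Or.inr (h2.2.2.1 a ha x hx2 z hz hza hzx)
    · rcases hb with hb | hb
      · exact Or.inl (h1.2.2.1 x hx1 b hb z hz hxz hzb)
      · exact Or.inr (h2.2.2.1 x hx2 b hb z hz hxz hzb)
  have hsub : G1 ∪ G2 ⊆ I \ B := union_subset h1.2.1 h2.2.1
  have e1 : G1 ∪ G2 = G1 := h1.2.2.2 _ subset_union_left hsub hconv
  have e2 : G1 ∪ G2 = G2 := h2.2.2.2 _ subset_union_right hsub hconv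
  rw [← e1, e2]

end Aux

/-- The tail of a gap `G = I ∩ [λ, δ)` of a limit suitable set `B` with `λ ≠ 0`: letting `σ'` be
the supremum of the members of `B` below `δ` that are limit points of `I`, the set `I ∩ (σ', λ)`
is a nonempty subset of `B` consisting of non-limit-points of `I`, of order type exactly `ω`,
with supremum `λ`. -/
theorem stmt7 (I B G : Set Ordinal) (hIcl : IsClosedSet I) (hIunb : IsUnboundedSet I)
    (hB : LimitSuitable I B) (hG : IsGap I B G) (δ : Ordinal)
    (hGeq : G = I ∩ Ico (GapFoot B G) δ) (hlam : GapFoot B G ≠ 0) :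
    sSup {β ∈ B | β < δ ∧ IsLimitPoint I β} < GapFoot B G ∧
    (I ∩ Ioo (sSup {β ∈ B | β < δ ∧ IsLimitPoint I β}) (GapFoot B G)).Nonempty ∧
    I ∩ Ioo (sSup {β ∈ B | β < δ ∧ IsLimitPoint I β}) (GapFoot B G) ⊆ B ∧
    (∀ x ∈ I ∩ Ioo (sSup {β ∈ B | β < δ ∧ IsLimitPoint I β}) (GapFoot B G),
      ¬ IsLimitPoint I x) ∧
    Ordinal.type ((· < ·) :
        (I ∩ Ioo (sSup {β ∈ B | β < δ ∧ IsLimitPoint I β}) (GapFoot B G) : Set Ordinal) →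
        (I ∩ Ioo (sSup {β ∈ B | β < δ ∧ IsLimitPoint I β}) (GapFoot B G) : Set Ordinal) → Prop)
      = Ordinal.omega0 ∧
    sSup (I ∩ Ioo (sSup {β ∈ B | β < δ ∧ IsLimitPoint I β}) (GapFoot B G)) = GapFoot B G := by
  classical
  obtain ⟨hSuit, hGaps⟩ := hB
  have hns : ¬ BddAbove I := aux_not_bddAbove hIunb
  set e := Ordinal.enumOrd I with he
  have hm : StrictMono e := Ordinal.enumOrd_strictMono hns
  obtain ⟨-, hfoot⟩ := hGaps G hG
  obtain ⟨ν, hν⟩ := hfoot hlam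
  have hfoot0 : GapFoot B G = sSup (insert 0 {β ∈ B | β < sInf G}) := rfl
  rw [hν] at hGeq hlam hfoot0 ⊢
  set lam := e (ν + Ordinal.omega0) with hlamdef
  have hBbar := hSuit.1
  have hBI : B ⊆ I := fun b hb => hBbar (Or.inl hb)
  have hpred := hSuit.2.2.2.2
  -- ξ decomposition
  set ξ : Ordinal := Ordinal.omega0 * (ν / Ordinal.omega0) with hξdef
  have hξν : ξ + ν % Ordinal.omega0 = ν := Ordinal.div_add_mod ν _
  have hmod : ν % Ordinal.omega0 < Ordinal.omega0 :=
    Ordinal.mod_lt ν Ordinal.omega0_pos.ne'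
  have hξω : ξ + Ordinal.omega0 = ν + Ordinal.omega0 := by
    rw [← hξν, add_assoc, Ordinal.add_omega0 hmod]
  have hξ0 : ξ = 0 ∨ Order.IsSuccLimit ξ := by
    rcases eq_or_ne (ν / Ordinal.omega0) 0 with h | h
    · left; rw [hξdef, h, mul_zero]
    · right
      exact Ordinal.isSuccLimit_mul_left Ordinal.isSuccLimit_omega0 (pos_iff_ne_zero.2 h)
  have hmax : ∀ η : Ordinal, Order.IsSuccLimit η → η < ξ + Ordinal.omega0 → η ≤ ξ := by
    intro η hη hlt
    by_contra hgt
    push_neg at hgt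
    have h1 : ξ + (η - ξ) = η := Ordinal.add_sub_cancel_of_le hgt.le
    have h2 : η - ξ < Ordinal.omega0 := Ordinal.sub_lt_of_lt_add hlt Ordinal.omega0_pos
    obtain ⟨n, hn⟩ := Ordinal.lt_omega0.1 h2
    have hn0 : n ≠ 0 := by
      rintro rfl
      rw [Nat.cast_zero] at hn
      rw [hn, add_zero] at h1
      exact absurd h1 (ne_of_lt hgt)
    obtain ⟨k, rfl⟩ := Nat.exists_eq_succ_of_ne_zero hn0
    have hsucc : η = (ξ + k) + 1 := by
      rw [← h1, hn]
      rw [show ((k + 1 : ℕ) : Ordinal) = (k : Ordinal) + 1 by push_cast; rfl, add_assoc]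
    rw [hsucc, Ordinal.add_one_eq_succ] at hη
    exact Order.not_isSuccLimit_succ _ hη
  have hνω : Order.IsSuccLimit (ν + Ordinal.omega0) := Ordinal.isSuccLimit_add ν Ordinal.isSuccLimit_omega0
  obtain ⟨hlamLP', hlamSup'⟩ := aux_limit_enumOrd hIcl hns hνω
  have hlamLP : IsLimitPoint I lam := by rw [hlamdef]; exact hlamLP'
  have hlamSup : lam = sSup (e '' Iio (ν + Ordinal.omega0)) := by
    rw [hlamdef]; exact hlamSup'
  have hξltν : ξ < ν + Ordinal.omega0 := by
    rw [← hξω]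
    simpa using (add_lt_add_left Ordinal.omega0_pos ξ)
  have hξlam : e ξ < lam := by rw [hlamdef]; exact hm hξltν
  have hlamI : lam ∈ I := hIcl _ hlamLP
  obtain ⟨g0, hg0⟩ := hG.1
  have hg0' : g0 ∈ I ∩ Ico lam δ := hGeq ▸ hg0
  have hlamδ : lam < δ := lt_of_le_of_lt hg0'.2.1 hg0'.2.2
  have hlamG : lam ∈ G := by rw [hGeq]; exact ⟨hlamI, le_refl _, hlamδ⟩
  have hlamnB : lam ∉ B := (hG.2.1 hlamG).2
  have hinf : sInf G = lam :=
    le_antisymm (csInf_le (OrderBot.bddBelow G) hlamG)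
      (le_csInf hG.1 fun b hb => (hGeq ▸ hb : b ∈ I ∩ Ico lam δ).2.1)
  have hfoots : lam = sSup (insert 0 (B ∩ Iio lam)) := by
    rw [hinf] at hfoot0
    exact hfoot0
  have hSne : (B ∩ Iio lam).Nonempty := by
    by_contra hne
    rw [not_nonempty_iff_eq_empty.1 hne] at hfoots
    simp only [insert_empty_eq, csSup_singleton] at hfoots
    exact hlam hfoots
  have hBlam : sSup (B ∩ Iio lam) = lam := by
    have hbdd : BddAbove (B ∩ Iio lam) := ⟨lam, fun y hy => hy.2.le⟩
    rw [csSup_insert hbdd hSne, sup_eq_right.mpr (zero_le)] at hfoots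
    exact hfoots.symm
  have hcof : ∀ α < lam, ∃ β, β ∈ B ∧ α < β ∧ β < lam := by
    intro α hα
    by_contra hc
    push_neg at hc
    have hle : sSup (B ∩ Iio lam) ≤ α := by
      apply csSup_le'
      rintro β ⟨hβB, hβlt⟩
      by_contra hβα
      exact absurd hβlt (not_lt.2 (hc β hβB (not_le.1 hβα)))
    rw [hBlam] at hle
    exact absurd hα (not_lt.2 hle)
  -- pulling membership downward
  have hstep : ∀ c : Ordinal, e (c + 1) ∈ B ∪ {l | IsLimitPoint B l} →
      e c ∈ B ∪ {l | IsLimitPoint B l} := fun c hc =>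
    hpred _ hc _ (aux_isGreatest_pred hns c)
  have hnotlimB : ∀ x ∈ B ∪ {l | IsLimitPoint B l}, ¬ IsLimitPoint I x → x ∈ B := by
    rintro x (hx | hx) hnl
    · exact hx
    · exact absurd (aux_limitPoint_mono hBI hx) hnl
  have hdown : ∀ k : ℕ, ∀ c : Ordinal, e (c + k) ∈ B ∪ {l | IsLimitPoint B l} →
      e c ∈ B ∪ {l | IsLimitPoint B l} := by
    intro k
    induction k with
    | zero => intro c hc; simpa using hc
    | succ n ih =>
      intro c hc
      apply hstep
      apply ih (c + 1)
      have hre : (c + 1) + (n : Ordinal) = c + ((n + 1 : ℕ) : Ordinal) := by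
        rw [show ((n + 1 : ℕ) : Ordinal) = (1 : Ordinal) + n by
          rw [show (n + 1 : ℕ) = 1 + n from Nat.add_comm n 1]; push_cast; rfl, ← add_assoc]
      rw [hre]
      exact hc
  have hBe : ∀ c : Ordinal, ξ ≤ c → c < ν + Ordinal.omega0 →
      e c ∈ B ∪ {l | IsLimitPoint B l} := by
    intro c hc1 hc2
    obtain ⟨β, hβB, hβ1, hβ2⟩ := hcof (e c) (by rw [hlamdef]; exact hm hc2)
    obtain ⟨c₂, rfl⟩ := Ordinal.enumOrd_surjective hns (hBI hβB)
    have hcc : c < c₂ := hm.lt_iff_lt.1 hβ1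
    have hc₂ : c₂ < ν + Ordinal.omega0 := hm.lt_iff_lt.1 (by rw [← hlamdef]; exact hβ2)
    have hc₂' : c₂ < c + Ordinal.omega0 := by
      calc c₂ < ξ + Ordinal.omega0 := by rw [hξω]; exact hc₂
        _ ≤ c + Ordinal.omega0 := add_le_add_left hc1 _
    have hsub : c₂ - c < Ordinal.omega0 := Ordinal.sub_lt_of_lt_add hc₂' Ordinal.omega0_pos
    obtain ⟨k, hk⟩ := Ordinal.lt_omega0.1 hsub
    have hck : c + (k : Ordinal) = c₂ := by
      rw [← hk]; exact Ordinal.add_sub_cancel_of_le hcc.le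
    exact hdown k c (by rw [hck]; exact Or.inl hβB)
  have hsuccform : ∀ c : Ordinal, ξ < c → c < ν + Ordinal.omega0 → ∃ d, c = d + 1 := by
    intro c h1 h2
    rcases Ordinal.zero_or_succ_or_isSuccLimit c with rfl | ⟨d, hd⟩ | hc
    · exact absurd h1 (not_lt_of_ge (zero_le))
    · exact ⟨d, by rw [← hd, Ordinal.add_one_eq_succ]⟩
    · exact absurd h1 (not_lt.2 (hmax c hc (by rwa [hξω])))
  have hnotlp : ∀ c : Ordinal, ξ < c → c < ν + Ordinal.omega0 → ¬ IsLimitPoint I (e c) := by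
    intro c h1 h2
    obtain ⟨d, rfl⟩ := hsuccform c h1 h2
    exact aux_not_limitPoint_succ hns d
  have hBe' : ∀ c : Ordinal, ξ < c → c < ν + Ordinal.omega0 → e c ∈ B := fun c h1 h2 =>
    hnotlimB _ (hBe c h1.le h2) (hnotlp c h1 h2)
  -- e ξ ∈ B when ξ ≠ 0
  have hξmem : ξ ≠ 0 → e ξ ∈ B := by
    intro hξne
    have hξlim : Order.IsSuccLimit ξ := hξ0.resolve_left hξne
    by_contra hnB
    obtain ⟨G', hG', hmemG'⟩ := aux_exists_gap (x := e ξ) ⟨Ordinal.enumOrd_mem hns ξ, hnB⟩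
    have hGbound : ∀ y ∈ G', y ≤ e ξ := by
      intro y hy
      by_contra hyg
      push_neg at hyg
      have hyIB := hG'.2.1 hy
      rcases lt_or_ge y lam with hylt | hyge
      · obtain ⟨c, rfl⟩ := Ordinal.enumOrd_surjective hns hyIB.1
        have h1 : ξ < c := hm.lt_iff_lt.1 hyg
        have h2 : c < ν + Ordinal.omega0 := hm.lt_iff_lt.1 (by rw [← hlamdef]; exact hylt)
        exact hyIB.2 (hBe' c h1 h2)
      · have hlamG' : lam ∈ G' :=
          hG'.2.2.1 _ hmemG' _ hy _ ⟨hlamI, hlamnB⟩ hξlam.le hyge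
        have hGG : G' = G := aux_gap_unique hG' hG hlamG' hlamG
        rw [hGG, hGeq] at hmemG'
        exact absurd hmemG'.2.1 (not_le.2 hξlam)
    obtain ⟨hcase', -⟩ := hGaps G' hG'
    rcases hcase' with ⟨hunb, -⟩ | ⟨δ', ⟨⟨hδ'B, hδ'ub⟩, hδ'lb⟩, hδ'LP, -, -⟩
    · obtain ⟨b, hbG', hbgt⟩ := hunb (e ξ)
      exact absurd (hGbound b hbG') (not_le.2 hbgt)
    · have hξ1 : ξ + 1 < ν + Ordinal.omega0 := by
        rw [← hξω]
        exact add_lt_add_right Ordinal.one_lt_omega0 ξ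
      have he1B : e (ξ + 1) ∈ B := hBe' (ξ + 1) (aux_lt_add_one ξ) hξ1
      have hδ'le : δ' ≤ e (ξ + 1) :=
        hδ'lb ⟨he1B, fun g hg => lt_of_le_of_lt (hGbound g hg) (hm (aux_lt_add_one ξ))⟩
      have hδ'gt : e ξ < δ' := hδ'ub _ hmemG'
      obtain ⟨c, rfl⟩ := Ordinal.enumOrd_surjective hns (hBI hδ'B)
      have hceq : c = ξ + 1 := by
        refine le_antisymm (hm.le_iff_le.1 hδ'le) ?_
        have hcgt : ξ < c := hm.lt_iff_lt.1 hδ'gt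
        rwa [Ordinal.add_one_eq_succ, Order.succ_le_iff]
      rw [hceq] at hδ'LP
      exact aux_not_limitPoint_succ hns ξ hδ'LP
  -- the set Λ
  set Λ := {β ∈ B | β < δ ∧ IsLimitPoint I β} with hΛdef
  have hΛchar : ∀ β ∈ Λ, ∃ c : Ordinal, Order.IsSuccLimit c ∧ c ≤ ξ ∧ β = e c := by
    rintro β ⟨hβB, hβδ, hβLP⟩
    have hβI : β ∈ I := hBI hβB
    have hβlam : β < lam := by
      by_contra hge
      push_neg at hge
      have hmem : β ∈ G := by rw [hGeq]; exact ⟨hβI, hge, hβδ⟩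
      exact (hG.2.1 hmem).2 hβB
    obtain ⟨c, rfl⟩ := Ordinal.enumOrd_surjective hns hβI
    have hc : c < ν + Ordinal.omega0 := hm.lt_iff_lt.1 (by rw [← hlamdef]; exact hβlam)
    rcases Ordinal.zero_or_succ_or_isSuccLimit c with rfl | ⟨d, rfl⟩ | hcl
    · exact absurd hβLP (aux_not_limitPoint_zero hns)
    · exfalso
      apply aux_not_limitPoint_succ hns d
      rwa [Ordinal.add_one_eq_succ]
    · exact ⟨c, hcl, hmax c hcl (by rwa [hξω]), rfl⟩
  have hΛsub : ∀ β ∈ Λ, β ≤ e ξ := by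
    intro β hβ
    obtain ⟨c, hcl, hcle, rfl⟩ := hΛchar β hβ
    exact hm.monotone hcle
  have hσ : sSup Λ ≤ e ξ := csSup_le' hΛsub
  -- starting index s of the tail
  obtain ⟨s, hsω, hslt, hBs, hnls, htail⟩ :
      ∃ s : Ordinal, s + Ordinal.omega0 = ν + Ordinal.omega0 ∧ s < ν + Ordinal.omega0 ∧
        (∀ c : Ordinal, s ≤ c → c < ν + Ordinal.omega0 → e c ∈ B) ∧
        (∀ c : Ordinal, s ≤ c → c < ν + Ordinal.omega0 → ¬ IsLimitPoint I (e c)) ∧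
        I ∩ Ioo (sSup Λ) lam = e '' Ico s (ν + Ordinal.omega0) := by
    rcases eq_or_ne ξ 0 with hξe | hξne
    · have hσ0 : sSup Λ = 0 := by
        have hemp : Λ = ∅ := by
          rw [eq_empty_iff_forall_notMem]
          intro β hβ
          obtain ⟨c, hcl, hcle, rfl⟩ := hΛchar β hβ
          rw [hξe, nonpos_iff_eq_zero] at hcle
          exact hcl.pos.ne' (by rw [hcle])
        rw [hemp, csSup_empty]
        exact Ordinal.bot_eq_zero
      have hω : ν + Ordinal.omega0 = Ordinal.omega0 := by rw [← hξω, hξe, zero_add]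
      rcases eq_or_ne (e 0) 0 with h0 | h0
      · refine ⟨1, ?_, ?_, ?_, ?_, ?_⟩
        · rw [hω, Ordinal.one_add_omega0]
        · rw [hω]; exact Ordinal.one_lt_omega0
        · intro c hc1 hc2
          exact hBe' c (by rw [hξe]; exact lt_of_lt_of_le zero_lt_one hc1) hc2
        · intro c hc1 hc2
          exact hnotlp c (by rw [hξe]; exact lt_of_lt_of_le zero_lt_one hc1) hc2
        · ext x
          constructor
          · rintro ⟨hxI, hx1, hx2⟩
            obtain ⟨c, rfl⟩ := Ordinal.enumOrd_surjective hns hxI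
            have hc2 : c < ν + Ordinal.omega0 := hm.lt_iff_lt.1 (by rw [← hlamdef]; exact hx2)
            have hc1 : 1 ≤ c := by
              by_contra hcc
              rw [not_le, Ordinal.lt_one_iff_zero] at hcc
              subst hcc
              rw [hσ0, ← he, h0] at hx1
              exact lt_irrefl 0 hx1
            exact ⟨c, ⟨hc1, hc2⟩, rfl⟩
          · rintro ⟨c, ⟨hc1, hc2⟩, rfl⟩
            refine ⟨Ordinal.enumOrd_mem hns c, ?_, by rw [hlamdef]; exact hm hc2⟩
            rw [hσ0]
            calc (0 : Ordinal) = e 0 := h0.symm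
              _ < e c := hm (lt_of_lt_of_le zero_lt_one hc1)
      · refine ⟨0, by rw [zero_add, hω], hνω.pos, ?_, ?_, ?_⟩
        · intro c hc1 hc2
          rcases eq_or_ne c 0 with rfl | hc0
          · refine hnotlimB _ (hstep 0 ?_) (aux_not_limitPoint_zero hns)
            rw [zero_add]
            exact Or.inl (hBe' 1 (by rw [hξe]; exact zero_lt_one)
              (by rw [hω]; exact Ordinal.one_lt_omega0))
          · exact hBe' c (by rw [hξe]; exact pos_iff_ne_zero.2 hc0) hc2
        · intro c hc1 hc2
          rcases eq_or_ne c 0 with rfl | hc0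
          · exact aux_not_limitPoint_zero hns
          · exact hnotlp c (by rw [hξe]; exact pos_iff_ne_zero.2 hc0) hc2
        · ext x
          constructor
          · rintro ⟨hxI, hx1, hx2⟩
            obtain ⟨c, rfl⟩ := Ordinal.enumOrd_surjective hns hxI
            have hc2 : c < ν + Ordinal.omega0 := hm.lt_iff_lt.1 (by rw [← hlamdef]; exact hx2)
            exact ⟨c, ⟨zero_le, hc2⟩, rfl⟩
          · rintro ⟨c, ⟨hc1, hc2⟩, rfl⟩
            refine ⟨Ordinal.enumOrd_mem hns c, ?_, by rw [hlamdef]; exact hm hc2⟩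
            rw [hσ0]
            calc (0 : Ordinal) < e 0 := pos_iff_ne_zero.2 h0
              _ ≤ e c := hm.monotone (zero_le)
    · have hξB := hξmem hξne
      have hξlim : Order.IsSuccLimit ξ := hξ0.resolve_left hξne
      have hξLP : IsLimitPoint I (e ξ) := (aux_limit_enumOrd hIcl hns hξlim).1
      have hσξ : sSup Λ = e ξ :=
        le_antisymm hσ (le_csSup ⟨e ξ, hΛsub⟩ ⟨hξB, hξlam.trans hlamδ, hξLP⟩)
      have hξ1lt : ξ + 1 < ν + Ordinal.omega0 := by
        rw [← hξω]
        exact add_lt_add_right Ordinal.one_lt_omega0 ξ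
      refine ⟨ξ + 1, ?_, hξ1lt, ?_, ?_, ?_⟩
      · rw [add_assoc, Ordinal.one_add_omega0, hξω]
      · intro c hc1 hc2
        exact hBe' c (lt_of_lt_of_le (aux_lt_add_one ξ) hc1) hc2
      · intro c hc1 hc2
        exact hnotlp c (lt_of_lt_of_le (aux_lt_add_one ξ) hc1) hc2
      · ext x
        constructor
        · rintro ⟨hxI, hx1, hx2⟩
          obtain ⟨c, rfl⟩ := Ordinal.enumOrd_surjective hns hxI
          have hc2 : c < ν + Ordinal.omega0 := hm.lt_iff_lt.1 (by rw [← hlamdef]; exact hx2)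
          have hc1 : ξ + 1 ≤ c := by
            rw [Ordinal.add_one_eq_succ, Order.succ_le_iff]
            exact hm.lt_iff_lt.1 (by rw [← hσξ]; exact hx1)
          exact ⟨c, ⟨hc1, hc2⟩, rfl⟩
        · rintro ⟨c, ⟨hc1, hc2⟩, rfl⟩
          refine ⟨Ordinal.enumOrd_mem hns c, ?_, by rw [hlamdef]; exact hm hc2⟩
          rw [hσξ]
          exact hm (lt_of_lt_of_le (aux_lt_add_one ξ) hc1)
  have hbddtail : BddAbove (I ∩ Ioo (sSup Λ) lam) := ⟨lam, fun y hy => hy.2.2.le⟩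
  refine ⟨hσ.trans_lt hξlam, ?_, ?_, ?_, ?_, ?_⟩
  · rw [htail]
    exact ⟨e s, mem_image_of_mem _ ⟨le_refl s, hslt⟩⟩
  · intro x hx
    rw [htail] at hx
    obtain ⟨c, ⟨hc1, hc2⟩, rfl⟩ := hx
    exact hBs c hc1 hc2
  · intro x hx
    rw [htail] at hx
    obtain ⟨c, ⟨hc1, hc2⟩, rfl⟩ := hx
    exact hnls c hc1 hc2
  · -- order type ω
    have hmemn : ∀ n : ℕ, e (s + n) ∈ I ∩ Ioo (sSup Λ) lam := by
      intro n
      rw [htail]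
      refine ⟨s + n, ⟨le_add_of_nonneg_right (zero_le), ?_⟩, rfl⟩
      rw [← hsω]
      exact add_lt_add_right (Ordinal.nat_lt_omega0 n) s
    set T := I ∩ Ioo (sSup Λ) lam with hT
    let f : ℕ → T := fun n => ⟨e (s + n), hmemn n⟩
    have hfmono : StrictMono f := by
      intro a b hab
      show e (s + a) < e (s + b)
      exact hm (add_lt_add_right (by exact_mod_cast hab) s)
    have hfsurj : Function.Surjective f := by
      rintro ⟨x, hx⟩
      have hx' : x ∈ e '' Ico s (ν + Ordinal.omega0) := by
        rw [← htail]; exact hx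
      obtain ⟨c, ⟨hc1, hc2⟩, hc3⟩ := hx'
      have hcs : c - s < Ordinal.omega0 :=
        Ordinal.sub_lt_of_lt_add (by rw [hsω]; exact hc2) Ordinal.omega0_pos
      obtain ⟨n, hn⟩ := Ordinal.lt_omega0.1 hcs
      refine ⟨n, Subtype.ext ?_⟩
      show e (s + n) = x
      rw [← hc3, ← hn, Ordinal.add_sub_cancel_of_le hc1]
    have hiso : ((· < ·) : ℕ → ℕ → Prop) ≃r ((· < ·) : T → T → Prop) :=
      ⟨Equiv.ofBijective f ⟨hfmono.injective, hfsurj⟩, @fun a b => hfmono.lt_iff_lt⟩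
    have htype := hiso.ordinal_lift_type_eq
    simp only [Ordinal.type_nat_lt, Ordinal.lift_omega0, Ordinal.lift_uzero] at htype
    exact htype.symm
  · -- supremum
    apply le_antisymm
    · apply csSup_le'
      intro x hx
      rw [htail] at hx
      obtain ⟨c, ⟨hc1', hc2⟩, rfl⟩ := hx
      exact le_of_lt (by rw [hlamdef]; exact hm hc2)
    · have hle : sSup (e '' Iio (ν + Ordinal.omega0)) ≤ sSup (I ∩ Ioo (sSup Λ) lam) := by
        apply csSup_le'
        rintro x ⟨c, hc, rfl⟩
        rcases le_or_gt s c with hsc | hcs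
        · exact le_csSup hbddtail (by rw [htail]; exact ⟨c, ⟨hsc, hc⟩, rfl⟩)
        · exact le_trans (hm.monotone hcs.le)
            (le_csSup hbddtail (by rw [htail]; exact ⟨s, ⟨le_refl s, hslt⟩, rfl⟩))
      calc lam = sSup (e '' Iio (ν + Ordinal.omega0)) := hlamSup
        _ ≤ sSup (I ∩ Ioo (sSup Λ) lam) := hle
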